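/- arXiv:1210.2454 — 2 statements merged into one kernel-verified Lean document; each statement's English description precedes it below -/
import Mathlib

section
/- The shuffle of two regular languages is regular: if L₁ and L₂ are languages over a finite alphabet recognized by DFAs with n₁ and n₂ states respectively, then the language ⋃_{w₁ ∈ L₁, w₂ ∈ L₂} shuffle w₁ w₂ is recognized by a DFA (in fact one with at most 2^(n₁·n₂) states, but regularity suffices). -/
def shuffle {A : Type*} : List A → List A → Set (List A)
  | [], w => {w}
  | a :: w₁, [] => {a :: w₁}
  | a :: w₁, b :: w₂ =>
      (a :: ·) '' shuffle w₁ (b :: w₂) ∪ (b :: ·) '' shuffle (a :: w₁) w₂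
  termination_by w₁ w₂ => w₁.length + w₂.length

def lshuffle {A : Type*} (L₁ L₂ : Set (List A)) : Set (List A) :=
  { u | ∃ w₁ ∈ L₁, ∃ w₂ ∈ L₂, u ∈ shuffle w₁ w₂ }

@[simp] lemma shuffle_nil_left {A : Type*} (w : List A) : shuffle [] w = {w} := by
  cases w <;> simp [shuffle]

@[simp] lemma shuffle_nil_right {A : Type*} (w : List A) : shuffle w [] = {w} := by
  cases w <;> simp [shuffle]

lemma nil_mem_shuffle_iff {A : Type*} (w₁ w₂ : List A) :
    [] ∈ shuffle w₁ w₂ ↔ w₁ = [] ∧ w₂ = [] := by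
  match w₁, w₂ with
  | [], w₂ => simp [Set.mem_singleton_iff, eq_comm]
  | a :: w₁, [] => simp
  | a :: w₁, b :: w₂ =>
    simp only [shuffle, Set.mem_union, Set.mem_image]
    constructor
    · rintro (⟨x, _, h⟩ | ⟨x, _, h⟩) <;> simp at h
    · rintro ⟨h, -⟩; simp at h

lemma cons_mem_shuffle_iff {A : Type*} (a : A) (u : List A) (w₁ w₂ : List A) :
    a :: u ∈ shuffle w₁ w₂ ↔
      (∃ w₁', w₁ = a :: w₁' ∧ u ∈ shuffle w₁' w₂) ∨
      (∃ w₂', w₂ = a :: w₂' ∧ u ∈ shuffle w₁ w₂') := by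
  match w₁, w₂ with
  | [], w₂ =>
    simp only [shuffle_nil_left, Set.mem_singleton_iff]
    constructor
    · rintro rfl; exact Or.inr ⟨u, rfl, rfl⟩
    · rintro (⟨w₁', h, -⟩ | ⟨w₂', rfl, h⟩)
      · cases h
      · rw [h]
  | b :: w₁, [] =>
    simp only [shuffle_nil_right, Set.mem_singleton_iff]
    constructor
    · rintro h
      exact Or.inl ⟨u, h.symm, rfl⟩
    · rintro (⟨w₁', h, h'⟩ | ⟨w₂', h, -⟩)
      · rw [h, h']
      · cases h
  | b :: w₁, c :: w₂ =>
    simp only [shuffle, Set.mem_union, Set.mem_image]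
    constructor
    · rintro (⟨x, hx, h⟩ | ⟨x, hx, h⟩)
      · obtain ⟨rfl, rfl⟩ := List.cons.inj h
        exact Or.inl ⟨w₁, rfl, hx⟩
      · obtain ⟨rfl, rfl⟩ := List.cons.inj h
        exact Or.inr ⟨w₂, rfl, hx⟩
    · rintro (⟨w₁', h, h'⟩ | ⟨w₂', h, h'⟩)
      · obtain ⟨rfl, rfl⟩ := List.cons.inj h
        exact Or.inl ⟨u, h', rfl⟩
      · obtain ⟨rfl, rfl⟩ := List.cons.inj h
        exact Or.inr ⟨u, h', rfl⟩

section NFAaux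

variable {A : Type*} {σ : Type*}

lemma NFA.evalFrom_union' (M : NFA A σ) (S T : Set σ) (u : List A) :
    M.evalFrom (S ∪ T) u = M.evalFrom S u ∪ M.evalFrom T u := by
  induction u generalizing S T with
  | nil => rfl
  | cons a u ih =>
    have : M.stepSet (S ∪ T) a = M.stepSet S a ∪ M.stepSet T a := by
      ext x
      simp only [NFA.stepSet, Set.mem_iUnion, Set.mem_union]
      aesop
    simp only [NFA.evalFrom, List.foldl_cons] at *
    rw [this, ih]

end NFAaux

section Main

variable {A : Type*} {σ₁ σ₂ : Type} (M₁ : DFA A σ₁) (M₂ : DFA A σ₂)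

/-- NFA for the shuffle of two DFA languages. -/
def shuffleNFA : NFA A (σ₁ × σ₂) where
  step := fun p a => {(M₁.step p.1 a, p.2), (p.1, M₂.step p.2 a)}
  start := {(M₁.start, M₂.start)}
  accept := {p | p.1 ∈ M₁.accept ∧ p.2 ∈ M₂.accept}

lemma shuffleNFA_evalFrom (u : List A) (s : σ₁) (t : σ₂) (p : σ₁ × σ₂) :
    p ∈ (shuffleNFA M₁ M₂).evalFrom {(s, t)} u ↔
      ∃ w₁ w₂, u ∈ shuffle w₁ w₂ ∧ M₁.evalFrom s w₁ = p.1 ∧ M₂.evalFrom t w₂ = p.2 := by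
  induction u generalizing s t with
  | nil =>
    simp only [NFA.evalFrom_nil, Set.mem_singleton_iff]
    constructor
    · rintro rfl
      exact ⟨[], [], by simp, rfl, rfl⟩
    · rintro ⟨w₁, w₂, hu, h1, h2⟩
      obtain ⟨rfl, rfl⟩ := (nil_mem_shuffle_iff w₁ w₂).mp hu
      simp only [DFA.evalFrom_nil] at h1 h2
      ext <;> simp [← h1, ← h2]
  | cons a u ih =>
    have hstep : (shuffleNFA M₁ M₂).stepSet {(s, t)} a
        = ({(M₁.step s a, t)} : Set (σ₁ × σ₂)) ∪ {(s, M₂.step t a)} := by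
      rw [show (shuffleNFA M₁ M₂).stepSet {(s, t)} a = (shuffleNFA M₁ M₂).step (s, t) a
        from Set.biUnion_singleton _ _]
      exact Set.insert_eq _ _
    have : (shuffleNFA M₁ M₂).evalFrom {(s, t)} (a :: u)
        = (shuffleNFA M₁ M₂).evalFrom {(M₁.step s a, t)} u
          ∪ (shuffleNFA M₁ M₂).evalFrom {(s, M₂.step t a)} u := by
      show (shuffleNFA M₁ M₂).evalFrom ((shuffleNFA M₁ M₂).stepSet {(s,t)} a) u = _
      rw [hstep, NFA.evalFrom_union']
    rw [this]
    simp only [Set.mem_union, ih]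
    constructor
    · rintro (⟨w₁, w₂, hu, h1, h2⟩ | ⟨w₁, w₂, hu, h1, h2⟩)
      · exact ⟨a :: w₁, w₂, (cons_mem_shuffle_iff a u _ _).mpr (Or.inl ⟨w₁, rfl, hu⟩), h1, h2⟩
      · exact ⟨w₁, a :: w₂, (cons_mem_shuffle_iff a u _ _).mpr (Or.inr ⟨w₂, rfl, hu⟩), h1, h2⟩
    · rintro ⟨w₁, w₂, hu, h1, h2⟩
      rcases (cons_mem_shuffle_iff a u w₁ w₂).mp hu with ⟨w₁', rfl, hu'⟩ | ⟨w₂', rfl, hu'⟩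
      · exact Or.inl ⟨w₁', w₂, hu', h1, h2⟩
      · exact Or.inr ⟨w₁, w₂', hu', h1, h2⟩

lemma shuffleNFA_accepts :
    (shuffleNFA M₁ M₂).accepts = (lshuffle (M₁.accepts : Set (List A)) M₂.accepts : Language A) := by
  ext u
  rw [NFA.mem_accepts]
  constructor
  · rintro ⟨p, hp, hmem⟩
    rw [show (shuffleNFA M₁ M₂).start = {(M₁.start, M₂.start)} from rfl] at hmem
    obtain ⟨w₁, w₂, hu, h1, h2⟩ := (shuffleNFA_evalFrom M₁ M₂ u _ _ p).mp hmem
    exact ⟨w₁, by change M₁.evalFrom M₁.start w₁ ∈ M₁.accept; rw [h1]; exact hp.1,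
           w₂, by change M₂.evalFrom M₂.start w₂ ∈ M₂.accept; rw [h2]; exact hp.2, hu⟩
  · rintro ⟨w₁, hw₁, w₂, hw₂, hu⟩
    refine ⟨(M₁.eval w₁, M₂.eval w₂), ⟨hw₁, hw₂⟩, ?_⟩
    exact (shuffleNFA_evalFrom M₁ M₂ u _ _ _).mpr ⟨w₁, w₂, hu, rfl, rfl⟩

end Main

theorem lshuffle_isRegular {A : Type*} [Fintype A] (L₁ L₂ : Language A)
    (h₁ : L₁.IsRegular) (h₂ : L₂.IsRegular) :
    Language.IsRegular (lshuffle (L₁ : Set (List A)) L₂ : Language A) := by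
  obtain ⟨σ₁, f₁, M₁, rfl⟩ := h₁
  obtain ⟨σ₂, f₂, M₂, rfl⟩ := h₂
  refine ⟨Set (σ₁ × σ₂), inferInstance, (shuffleNFA M₁ M₂).toDFA, ?_⟩
  rw [NFA.toDFA_correct, shuffleNFA_accepts]
end

section
/- The intersection of a regular language with a shuffle of a regular language and the full language over a sub-alphabet is regular: if R and γ are regular over A, then R ∩ (γ ⧢ (List A)) is regular. -/
theorem shuffle_sublist {A : Type*} : ∀ (w₁ w₂ u : List A), u ∈ shuffle w₁ w₂ → List.Sublist w₁ u
  | [], w, u, h => by simp [shuffle] at h; exact List.nil_sublist u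
  | a :: w₁, [], u, h => by simp [shuffle] at h; subst h; exact List.Sublist.refl _
  | a :: w₁, b :: w₂, u, h => by
      simp only [shuffle, Set.mem_union, Set.mem_image] at h
      rcases h with ⟨v, hv, rfl⟩ | ⟨v, hv, rfl⟩
      · exact (shuffle_sublist _ _ _ hv).cons₂ a
      · exact (shuffle_sublist _ _ _ hv).cons b
  termination_by w₁ w₂ => w₁.length + w₂.length

theorem sublist_shuffle {A : Type*} {w u : List A} (h : List.Sublist w u) :
    ∃ w₂, u ∈ shuffle w w₂ := by
  induction h with
  | slnil => exact ⟨[], by simp [shuffle]⟩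
  | @cons l₁ l₂ a h ih =>
      obtain ⟨w₂, hw₂⟩ := ih
      refine ⟨a :: w₂, ?_⟩
      cases l₁ with
      | nil => simp [shuffle] at hw₂ ⊢; exact hw₂
      | cons c w' =>
          rw [shuffle]
          exact Or.inr ⟨l₂, hw₂, rfl⟩
  | @cons_cons l₁ l₂ a h ih =>
      obtain ⟨w₂, hw₂⟩ := ih
      refine ⟨w₂, ?_⟩
      cases w₂ with
      | nil =>
          cases l₁ with
          | nil => simp [shuffle] at hw₂ ⊢; exact hw₂
          | cons c w' => simp [shuffle] at hw₂ ⊢; exact hw₂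
      | cons b w₂' =>
          cases l₁ with
          | nil =>
              simp only [shuffle, Set.mem_singleton_iff] at hw₂
              subst hw₂
              rw [shuffle]
              exact Or.inl ⟨b :: w₂', by simp [shuffle], rfl⟩
          | cons c w' =>
              rw [shuffle]
              exact Or.inl ⟨l₂, hw₂, rfl⟩

theorem lshuffle_univ {A : Type*} (γ : Set (List A)) :
    lshuffle γ Set.univ = {u | ∃ w ∈ γ, List.Sublist w u} := by
  ext u
  constructor
  · rintro ⟨w₁, hw₁, w₂, -, hu⟩
    exact ⟨w₁, hw₁, shuffle_sublist _ _ _ hu⟩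
  · rintro ⟨w, hw, hsub⟩
    obtain ⟨w₂, hw₂⟩ := sublist_shuffle hsub
    exact ⟨w, hw, w₂, trivial, hw₂⟩

/-- Product DFA: first component tracks `M₁`, second tracks the set of states of `M₂`
reachable along sublists of the input. -/
def prodDFA {A σ₁ σ₂ : Type*} (M₁ : DFA A σ₁) (M₂ : DFA A σ₂) :
    DFA A (σ₁ × Set σ₂) where
  step := fun p a => (M₁.step p.1 a, p.2 ∪ (fun q => M₂.step q a) '' p.2)
  start := (M₁.start, {M₂.start})
  accept := {p | p.1 ∈ M₁.accept ∧ ∃ q ∈ p.2, q ∈ M₂.accept}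

theorem prodDFA_evalFrom {A σ₁ σ₂ : Type*} (M₁ : DFA A σ₁) (M₂ : DFA A σ₂) :
    ∀ (u : List A) (q₁ : σ₁) (S : Set σ₂),
      (prodDFA M₁ M₂).evalFrom (q₁, S) u =
        (M₁.evalFrom q₁ u, {p | ∃ q ∈ S, ∃ w, List.Sublist w u ∧ M₂.evalFrom q w = p}) := by
  intro u
  induction u with
  | nil =>
      intro q₁ S
      simp only [DFA.evalFrom_nil]
      congr 1
      ext p
      simp only [Set.mem_setOf_eq]
      constructor
      · intro hp; exact ⟨p, hp, [], List.nil_sublist _, rfl⟩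
      · rintro ⟨q, hq, w, hw, rfl⟩
        rw [List.sublist_nil.mp hw]
        exact hq
  | cons a u ih =>
      intro q₁ S
      have h1 : (prodDFA M₁ M₂).evalFrom (q₁, S) (a :: u) =
          (prodDFA M₁ M₂).evalFrom ((prodDFA M₁ M₂).step (q₁, S) a) u := rfl
      have h2 : M₁.evalFrom q₁ (a :: u) = M₁.evalFrom (M₁.step q₁ a) u := rfl
      rw [h1, h2]
      show (prodDFA M₁ M₂).evalFrom (M₁.step q₁ a, S ∪ (fun q => M₂.step q a) '' S) u = _
      rw [ih]
      congr 1
      ext p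
      simp only [Set.mem_setOf_eq]
      constructor
      · rintro ⟨q, hq, w, hw, rfl⟩
        rcases hq with hq | ⟨q', hq', rfl⟩
        · exact ⟨q, hq, w, hw.cons a, rfl⟩
        · exact ⟨q', hq', a :: w, hw.cons₂ a, rfl⟩
      · rintro ⟨q, hq, w, hw, rfl⟩
        rcases List.sublist_cons_iff.mp hw with hw' | ⟨r, rfl, hr⟩
        · exact ⟨q, Or.inl hq, w, hw', rfl⟩
        · exact ⟨M₂.step q a, Or.inr ⟨q, hq, rfl⟩, r, hr, rfl⟩

theorem inter_shuffle_univ_isRegular {A : Type*} [Fintype A] (R γ : Language A)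
    (hR : R.IsRegular) (hγ : γ.IsRegular) :
    Language.IsRegular
      (((R : Set (List A)) ∩ lshuffle (γ : Set (List A)) Set.univ : Set (List A)) : Language A) := by
  classical
  obtain ⟨σ₁, _, M₁, rfl⟩ := hR
  obtain ⟨σ₂, _, M₂, rfl⟩ := hγ
  refine ⟨σ₁ × Set σ₂, inferInstance, prodDFA M₁ M₂, ?_⟩
  ext u
  rw [DFA.mem_accepts]
  show (prodDFA M₁ M₂).evalFrom (M₁.start, {M₂.start}) u ∈ (prodDFA M₁ M₂).accept ↔ _
  rw [prodDFA_evalFrom]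
  simp only [prodDFA, Set.mem_setOf_eq, lshuffle_univ]
  constructor
  · rintro ⟨h₁, p, ⟨q, hq, w, hw, rfl⟩, hp⟩
    rw [Set.mem_singleton_iff] at hq; subst hq
    exact ⟨h₁, w, (DFA.mem_accepts M₂).mpr hp, (sublist_shuffle hw).imp fun _ h => ⟨trivial, h⟩⟩
  · rintro ⟨h₁, w, hw, hsub⟩
    exact ⟨h₁, M₂.evalFrom M₂.start w, ⟨M₂.start, rfl, w, shuffle_sublist _ _ _ hsub.choose_spec.2, rfl⟩, (DFA.mem_accepts M₂).mp hw⟩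
end
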